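/- arXiv:1801.05587 — 2 statements merged into one kernel-verified Lean document; each statement's English description precedes it below -/
import Mathlib

section
/- Let v ∈ C¹(ℝ) with v' Lipschitz with constant L₂ and ‖v'‖_{L∞} ≤ L₁, let u, ũ ∈ L¹(ℝ) and w ∈ W^{1,1}(ℝ) with w' ∈ L∞(ℝ). Then ∫_ℝ |v'((u∗w)(x))·(u∗w')(x) − v'((ũ∗w)(x))·(ũ∗w')(x)| dx ≤ L₁ ‖w'‖_{L¹} ‖u−ũ‖_{L¹} + L₂ ‖u‖_{L¹} ‖w'‖_{L∞} ‖w‖_{L¹} ‖u−ũ‖_{L¹}. -/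
open MeasureTheory

private lemma abs_int_le (f : ℝ → ℝ) : |∫ x, f x| ≤ ∫ x, |f x| := by
  simpa [Real.norm_eq_abs] using norm_integral_le_integral_norm (μ := volume) f

private lemma conv_helper {f g : ℝ → ℝ} (hf : Integrable f) (hg : Integrable g) :
    Integrable (fun x => ∫ y, f y * g (x - y)) ∧
    (∫ x, ∫ y, f y * g (x - y)) = (∫ y, f y) * (∫ x, g x) := by
  have h1 := hf.integrable_convolution (ContinuousLinearMap.mul ℝ ℝ) hg
  have h2 := integral_convolution (μ := volume) (ν := volume)
    (ContinuousLinearMap.mul ℝ ℝ) hf hg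
  simp only [convolution, ContinuousLinearMap.mul_apply'] at h1 h2
  exact ⟨h1, h2⟩

/-- Estimate on the `L¹` distance of the `x`-derivatives of `V = v∘(u∗w)` and
`Ṽ = v∘(u2∗w)`: with `‖v'‖_∞ ≤ L₁`, `v'` Lipschitz with constant `L₂`,
`u, u2 ∈ L¹`, `w ∈ W^{1,1}` with `|w'| ≤ Cw'`,
`∫ |v'(u∗w)·(u∗w') − v'(u2∗w)·(u2∗w')|
  ≤ L₁‖w'‖_{L¹}‖u−u2‖_{L¹} + L₂‖u‖_{L¹}‖w'‖_{L∞}‖w‖_{L¹}‖u−u2‖_{L¹}`. -/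
theorem deriv_velocity_L1_stability (v u u2 w : ℝ → ℝ) (L₁ L₂ Cw' : ℝ)
    (hv : ContDiff ℝ 1 v)
    (hv'lip : ∀ a b : ℝ, |deriv v a - deriv v b| ≤ L₂ * |a - b|)
    (hv'b : ∀ a : ℝ, |deriv v a| ≤ L₁)
    (hu : Integrable u) (hu2 : Integrable u2)
    (hw : Integrable w) (hwC : ContDiff ℝ 1 w)
    (hw'i : Integrable (deriv w)) (hw'b : ∀ x, |deriv w x| ≤ Cw') :
    ∫ x : ℝ, |deriv v (∫ y : ℝ, u y * w (x - y)) * (∫ y : ℝ, u y * deriv w (x - y))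
        - deriv v (∫ y : ℝ, u2 y * w (x - y)) * (∫ y : ℝ, u2 y * deriv w (x - y))| ≤
      L₁ * (∫ x : ℝ, |deriv w x|) * (∫ x : ℝ, |u x - u2 x|)
      + L₂ * (∫ x : ℝ, |u x|) * Cw' * (∫ x : ℝ, |w x|) * (∫ x : ℝ, |u x - u2 x|) := by
  have hd : Integrable (fun y => u y - u2 y) := hu.sub hu2
  have hL₁ : 0 ≤ L₁ := (abs_nonneg _).trans (hv'b 0)
  have hL₂ : 0 ≤ L₂ := by have := hv'lip 0 1; have h0 := abs_nonneg (deriv v 0 - deriv v 1)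
                          simp at this; linarith
  have hCw' : 0 ≤ Cw' := (abs_nonneg _).trans (hw'b 0)
  have hui : 0 ≤ ∫ x, |u x| := integral_nonneg fun x => abs_nonneg _
  -- the two comparison convolutions
  obtain ⟨hG₁i, hG₁v⟩ := conv_helper hd.abs hw'i.abs
  obtain ⟨hG₂i, hG₂v⟩ := conv_helper hd.abs hw.abs
  set G₁ : ℝ → ℝ := fun x => ∫ y, |u y - u2 y| * |deriv w (x - y)| with hG₁
  set G₂ : ℝ → ℝ := fun x => ∫ y, |u y - u2 y| * |w (x - y)| with hG₂
  -- a.e. integrability of the convolution integrands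
  have hI1 := (hu.convolution_integrand (ContinuousLinearMap.mul ℝ ℝ) hw).prod_right_ae
  have hI2 := (hu2.convolution_integrand (ContinuousLinearMap.mul ℝ ℝ) hw).prod_right_ae
  have hI3 := (hu.convolution_integrand (ContinuousLinearMap.mul ℝ ℝ) hw'i).prod_right_ae
  have hI4 := (hu2.convolution_integrand (ContinuousLinearMap.mul ℝ ℝ) hw'i).prod_right_ae
  simp only [ContinuousLinearMap.mul_apply'] at hI1 hI2 hI3 hI4
  have hbound : ∀ᵐ x : ℝ,
      |deriv v (∫ y : ℝ, u y * w (x - y)) * (∫ y : ℝ, u y * deriv w (x - y))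
        - deriv v (∫ y : ℝ, u2 y * w (x - y)) * (∫ y : ℝ, u2 y * deriv w (x - y))| ≤
      L₁ * G₁ x + (L₂ * (∫ x, |u x|) * Cw') * G₂ x := by
    filter_upwards [hI1, hI2, hI3, hI4] with x hI1 hI2 hI3 hI4
    set A := ∫ y : ℝ, u y * w (x - y)
    set A2 := ∫ y : ℝ, u2 y * w (x - y)
    set B := ∫ y : ℝ, u y * deriv w (x - y)
    set B2 := ∫ y : ℝ, u2 y * deriv w (x - y)
    have habsI : Integrable (fun y => |u y| * |deriv w (x - y)|) := by
      simp_rw [← abs_mul]; exact hI3.abs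
    have hBb : |B| ≤ Cw' * ∫ y, |u y| := by
      calc |B| ≤ ∫ y, |u y * deriv w (x - y)| := abs_int_le _
        _ = ∫ y, |u y| * |deriv w (x - y)| := by simp_rw [abs_mul]
        _ ≤ ∫ y, |u y| * Cw' := integral_mono habsI (hu.abs.mul_const _)
              fun y => mul_le_mul_of_nonneg_left (hw'b _) (abs_nonneg _)
        _ = Cw' * ∫ y, |u y| := by rw [integral_mul_const, mul_comm]
    have hBB : |B - B2| ≤ G₁ x := by
      rw [← integral_sub hI3 hI4]
      calc |∫ y, (u y * deriv w (x - y) - u2 y * deriv w (x - y))|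
          ≤ ∫ y, |u y * deriv w (x - y) - u2 y * deriv w (x - y)| :=
            abs_int_le _
        _ = G₁ x := by simp_rw [hG₁, ← sub_mul, abs_mul]
    have hAA : |A - A2| ≤ G₂ x := by
      rw [← integral_sub hI1 hI2]
      calc |∫ y, (u y * w (x - y) - u2 y * w (x - y))|
          ≤ ∫ y, |u y * w (x - y) - u2 y * w (x - y)| := abs_int_le _
        _ = G₂ x := by simp_rw [hG₂, ← sub_mul, abs_mul]
    have hG₂x : 0 ≤ G₂ x := integral_nonneg fun y =>
      mul_nonneg (abs_nonneg _) (abs_nonneg _)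
    calc |deriv v A * B - deriv v A2 * B2|
        = |(deriv v A - deriv v A2) * B + deriv v A2 * (B - B2)| := by congr 1; ring
      _ ≤ |(deriv v A - deriv v A2) * B| + |deriv v A2 * (B - B2)| := abs_add_le _ _
      _ = |deriv v A - deriv v A2| * |B| + |deriv v A2| * |B - B2| := by
          rw [abs_mul, abs_mul]
      _ ≤ (L₂ * |A - A2|) * (Cw' * ∫ y, |u y|) + L₁ * G₁ x :=
          add_le_add (mul_le_mul (hv'lip _ _) hBb (abs_nonneg _)
            (mul_nonneg hL₂ (abs_nonneg _)))
            (mul_le_mul (hv'b _) hBB (abs_nonneg _) hL₁)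
      _ ≤ (L₂ * G₂ x) * (Cw' * ∫ y, |u y|) + L₁ * G₁ x := by
          have := mul_le_mul_of_nonneg_right
            (mul_le_mul_of_nonneg_left hAA hL₂) (mul_nonneg hCw' hui)
          linarith
      _ = L₁ * G₁ x + (L₂ * (∫ x, |u x|) * Cw') * G₂ x := by ring
  have hInt : Integrable (fun x => L₁ * G₁ x + (L₂ * (∫ x, |u x|) * Cw') * G₂ x) :=
    (hG₁i.const_mul _).add (hG₂i.const_mul _)
  calc ∫ x : ℝ, |deriv v (∫ y : ℝ, u y * w (x - y)) * (∫ y : ℝ, u y * deriv w (x - y))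
        - deriv v (∫ y : ℝ, u2 y * w (x - y)) * (∫ y : ℝ, u2 y * deriv w (x - y))|
      ≤ ∫ x, (L₁ * G₁ x + (L₂ * (∫ x, |u x|) * Cw') * G₂ x) :=
        integral_mono_of_nonneg (Filter.Eventually.of_forall fun x => abs_nonneg _) hInt hbound
    _ = L₁ * (∫ x, G₁ x) + (L₂ * (∫ x, |u x|) * Cw') * ∫ x, G₂ x := by
        rw [integral_add (hG₁i.const_mul _) (hG₂i.const_mul _), integral_const_mul,
          integral_const_mul]
    _ = L₁ * (∫ x : ℝ, |deriv w x|) * (∫ x : ℝ, |u x - u2 x|)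
      + L₂ * (∫ x : ℝ, |u x|) * Cw' * (∫ x : ℝ, |w x|) * (∫ x : ℝ, |u x - u2 x|) := by
        rw [hG₁, hG₂, hG₁v, hG₂v]; ring
end

section
/- Consider the Lax–Friedrichs update ρ_j^{n+1} = ρ_j^n − λ(F_{j+1/2}^n − F_{j−1/2}^n) with F_{j+1/2} = ½(f_j v_j + f_{j+1} v_{j+1}) − (α/2)(ρ_{j+1}−ρ_j), where f_j = f(ρ_j) with f : ℝ → ℝ differentiable, f(0)=0, |f'| ≤ M, and v_j ∈ [0, V] for all j. If α ≥ MV and λ(α + 2MV) ≤ 1, then ρ_j^n ≥ 0 for all j implies ρ_j^{n+1} ≥ 0 for all j. -/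
/-- Positivity preservation of the Lax–Friedrichs scheme
`ρ_j^{n+1} = ρ_j − λ(F_{j+1/2} − F_{j−1/2})` with
`F_{j+1/2} = ½(f(ρ_j)v_j + f(ρ_{j+1})v_{j+1}) − (α/2)(ρ_{j+1}−ρ_j)`:
if `f` is differentiable with `f(0)=0`, `|f'| ≤ M`, `v_j ∈ [0,V]`, `α ≥ MV`
and `λ(α + 2MV) ≤ 1`, then nonnegativity of `(ρ_j)` is preserved. -/
theorem laxFriedrichs_positivity (f : ℝ → ℝ) (M V lam alpha : ℝ) (ρ v : ℤ → ℝ)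
    (hf : Differentiable ℝ f) (hf0 : f 0 = 0)
    (hf' : ∀ x : ℝ, |deriv f x| ≤ M)
    (hv : ∀ j : ℤ, v j ∈ Set.Icc 0 V)
    (hlam : 0 < lam) (halpha : M * V ≤ alpha)
    (hCFL : lam * (alpha + 2 * M * V) ≤ 1)
    (hρ : ∀ j : ℤ, 0 ≤ ρ j) :
    ∀ j : ℤ, 0 ≤ ρ j - lam *
      (((f (ρ j) * v j + f (ρ (j+1)) * v (j+1)) / 2 - alpha / 2 * (ρ (j+1) - ρ j))
        - ((f (ρ (j-1)) * v (j-1) + f (ρ j) * v j) / 2 - alpha / 2 * (ρ j - ρ (j-1)))) := by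
  have hM : 0 ≤ M := le_trans (abs_nonneg _) (hf' 0)
  have hV : 0 ≤ V := le_trans (hv 0).1 (hv 0).2
  -- |f x| ≤ M * x for x ≥ 0
  have hfb : ∀ x : ℝ, 0 ≤ x → |f x| ≤ M * x := by
    intro x hx
    have h := Convex.norm_image_sub_le_of_norm_deriv_le (s := (Set.univ : Set ℝ))
      (fun y _ => hf y)
      (fun y _ => by simpa using hf' y) convex_univ (Set.mem_univ 0) (Set.mem_univ x)
    simpa [hf0, abs_of_nonneg hx] using h
  -- key per-term bounds
  have key : ∀ j : ℤ, |f (ρ j) * v j| ≤ alpha * ρ j := by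
    intro j
    have h1 : |f (ρ j) * v j| = |f (ρ j)| * v j := by
      rw [abs_mul, abs_of_nonneg (hv j).1]
    calc |f (ρ j) * v j| = |f (ρ j)| * v j := h1
      _ ≤ (M * ρ j) * V :=
        mul_le_mul (hfb _ (hρ j)) (hv j).2 (hv j).1
          (mul_nonneg hM (hρ j))
      _ = (M * V) * ρ j := by ring
      _ ≤ alpha * ρ j := mul_le_mul_of_nonneg_right halpha (hρ j)
  intro j
  have h1 : 0 ≤ alpha * ρ (j+1) - f (ρ (j+1)) * v (j+1) :=
    sub_nonneg.mpr (le_trans (le_abs_self _) (key (j+1)))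
  have h2 : 0 ≤ alpha * ρ (j-1) + f (ρ (j-1)) * v (j-1) := by
    have := neg_abs_le (f (ρ (j-1)) * v (j-1))
    nlinarith [key (j-1)]
  have h3 : lam * alpha ≤ 1 := by nlinarith [mul_nonneg (mul_nonneg hlam.le hM) hV]
  have h4 : 0 ≤ (1 - lam * alpha) * ρ j :=
    mul_nonneg (by linarith) (hρ j)
  have heq : ρ j - lam *
      (((f (ρ j) * v j + f (ρ (j+1)) * v (j+1)) / 2 - alpha / 2 * (ρ (j+1) - ρ j))
        - ((f (ρ (j-1)) * v (j-1) + f (ρ j) * v j) / 2 - alpha / 2 * (ρ j - ρ (j-1)))) =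
      (1 - lam * alpha) * ρ j
        + lam / 2 * (alpha * ρ (j+1) - f (ρ (j+1)) * v (j+1))
        + lam / 2 * (alpha * ρ (j-1) + f (ρ (j-1)) * v (j-1)) := by ring
  rw [heq]
  have hl2 : 0 ≤ lam / 2 := by linarith
  positivity
end
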